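/- Let n ≥ 3 be an integer, let γ and P be symmetric n×n real matrices with γ invertible, let ε > 0, and let q : [0, ε) → Sym(n, ℝ) be a C² family of symmetric matrices. Define g(Ω) := γ + Ω² P + (Ω⁴/4) P γ⁻¹ P + Ωⁿ q(Ω) and assume g(Ω) is invertible for every Ω ∈ [0, ε). Then, with dots denoting d/dΩ, lim_{Ω→0⁺} Ω^{2−n} ( (1/2) ġ(Ω) g(Ω)⁻¹ ġ(Ω) + Ω⁻¹ ġ(Ω) − g̈(Ω) ) = −n(n−2) q(0). -/

import Mathlib

open scoped BigOperators Matrix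

attribute [local instance] Matrix.normedAddCommGroup Matrix.normedSpace

set_option maxHeartbeats 1600000

private lemma alg_key {k m : ℕ} (Ω : ℝ) (hΩ : Ω ≠ 0)
    (X u A W Y Y' Z P q0 q1 q2 Gi : Matrix (Fin k) (Fin k) ℝ)
    (hXPA : X = P + (Ω^2/2) • A)
    (hu : u = ((m:ℝ)+3) • q0 + Ω • q1)
    (hXGX : X * (Gi * X) = A - Ω^(m+3) • W)
    (hY : X * (Gi * u) = Y) (hY' : u * (Gi * X) = Y') (hZ : u * (Gi * u) = Z) :
    (1/2:ℝ) • (((2*Ω) • X + Ω^(m+2) • u) * Gi * ((2*Ω) • X + Ω^(m+2) • u))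
      + Ω⁻¹ • ((2*Ω) • X + Ω^(m+2) • u)
      - ((2:ℝ) • P + (3*Ω^2) • A + (((m:ℝ)+3)*(((m:ℝ)+3)-1)*Ω^(m+1)) • q0
          + (2*((m:ℝ)+3)*Ω^(m+2)) • q1 + Ω^(m+3) • q2)
    = Ω^(m+1) • ( (-(((m:ℝ)+3) * (((m:ℝ)+3) - 2))) • q0 + ((1-2*((m:ℝ)+3))*Ω) • q1
        - Ω^2 • q2 - (2*Ω^4) • W + Ω^2 • (Y + Y') + (Ω^(m+3)/2) • Z ) := by
  simp only [add_mul, mul_add, smul_mul_assoc, mul_smul_comm, Matrix.mul_assoc,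
    smul_add, smul_smul, smul_sub]
  rw [hXGX, hY, hY', hZ, hXPA, hu]
  simp only [smul_add, smul_smul, smul_sub]
  match_scalars <;> field_simp <;> ring

/-- analytic core of Theorem 2.9 of the paper.  For
`g(Ω) = γ + Ω²P + (Ω⁴/4)Pγ⁻¹P + Ωⁿ q(Ω)` (the Fefferman–Graham expansion with conformally
flat boundary), the rescaled electric Weyl quantity
`Ω^{2-n}((1/2)ġ g⁻¹ ġ + Ω⁻¹ġ − g̈)` tends to `−n(n−2) q(0)` as `Ω → 0⁺`. -/
theorem statement2
    (n : ℕ) (hn : 3 ≤ n)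
    (γ P : Matrix (Fin n) (Fin n) ℝ)
    (hγs : γ.IsSymm) (hPs : P.IsSymm) (hγ : IsUnit γ)
    (ε : ℝ) (hε : 0 < ε)
    (q : ℝ → Matrix (Fin n) (Fin n) ℝ)
    (hq : ContDiffOn ℝ 2 q (Set.Ico 0 ε))
    (hqs : ∀ Ω ∈ Set.Ico (0:ℝ) ε, (q Ω).IsSymm)
    (g : ℝ → Matrix (Fin n) (Fin n) ℝ)
    (hg : ∀ Ω : ℝ, g Ω = γ + Ω^2 • P + (Ω^4/4) • (P * γ⁻¹ * P) + Ω^n • q Ω)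
    (hinv : ∀ Ω ∈ Set.Ico (0:ℝ) ε, IsUnit (g Ω)) :
    Filter.Tendsto
      (fun Ω : ℝ => (Ω ^ ((2:ℤ) - (n:ℤ))) •
        ((1/2 : ℝ) • (deriv g Ω * (g Ω)⁻¹ * deriv g Ω)
          + Ω⁻¹ • deriv g Ω - deriv (deriv g) Ω))
      (nhdsWithin 0 (Set.Ioi 0))
      (nhds ((-((n : ℝ) * ((n : ℝ) - 2))) • q 0)) := by
  obtain ⟨m, rfl⟩ : ∃ m, n = m + 3 := ⟨n - 3, by omega⟩
  clear hn
  set A := P * γ⁻¹ * P with hA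
  set B := γ⁻¹ * P with hB
  set I := Set.Ico (0:ℝ) ε with hI
  have hUD : UniqueDiffOn ℝ I := uniqueDiffOn_Ico 0 ε
  set q1 : ℝ → Matrix (Fin (m+3)) (Fin (m+3)) ℝ := derivWithin q I with hq1
  set q2 : ℝ → Matrix (Fin (m+3)) (Fin (m+3)) ℝ := derivWithin q1 I with hq2
  set M : ℝ → Matrix (Fin (m+3)) (Fin (m+3)) ℝ := fun Ω => 1 + (Ω^2/2) • B with hM
  set X : ℝ → Matrix (Fin (m+3)) (Fin (m+3)) ℝ := fun Ω => P * M Ω with hX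
  set g0 : ℝ → Matrix (Fin (m+3)) (Fin (m+3)) ℝ := fun Ω => γ * M Ω * M Ω with hg0
  set u : ℝ → Matrix (Fin (m+3)) (Fin (m+3)) ℝ :=
    fun Ω => ((m:ℝ)+3) • q Ω + Ω • q1 Ω with hu
  set F : ℝ → Matrix (Fin (m+3)) (Fin (m+3)) ℝ := fun Ω =>
    (-(((m:ℝ)+3) * (((m:ℝ)+3) - 2))) • q Ω + ((1-2*((m:ℝ)+3))*Ω) • q1 Ω
      - Ω^2 • q2 Ω - (2*Ω^4) • (X Ω * ((g0 Ω)⁻¹ * (q Ω * ((g Ω)⁻¹ * X Ω))))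
      + Ω^2 • ((X Ω * ((g Ω)⁻¹ * u Ω)) + (u Ω * ((g Ω)⁻¹ * X Ω)))
      + (Ω^(m+3)/2) • (u Ω * ((g Ω)⁻¹ * u Ω)) with hF
  set l := nhdsWithin (0:ℝ) (Set.Ioo 0 ε) with hl
  have hll : nhdsWithin (0:ℝ) (Set.Ioi 0) = l :=
    le_antisymm (nhdsWithin_le_of_mem (Ioo_mem_nhdsGT_of_mem ⟨le_refl 0, hε⟩))
      (nhdsWithin_mono 0 Set.Ioo_subset_Ioi_self)
  rw [hll]
  have hlIco : l ≤ nhdsWithin 0 I := nhdsWithin_mono 0 Set.Ioo_subset_Ico_self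
  have hlnhds : l ≤ nhds 0 := nhdsWithin_le_nhds
  have hmem : Set.Ioo (0:ℝ) ε ∈ l := self_mem_nhdsWithin
  have h0I : (0:ℝ) ∈ I := ⟨le_refl 0, hε⟩
  have hγu : IsUnit γ.det := (Matrix.isUnit_iff_isUnit_det _).1 hγ
  have hγB : γ * B = P := Matrix.mul_nonsing_inv_cancel_left γ P hγu
  have hPB : P * B = A := (Matrix.mul_assoc P γ⁻¹ P).symm
  -- regularity of q1, q2
  have hq1cd : ContDiffOn ℝ 1 q1 I := hq.derivWithin hUD (by norm_num)
  have hq2cd : ContDiffOn ℝ 0 q2 I := hq1cd.derivWithin hUD (by norm_num)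
  have hq2c : ContinuousOn q2 I := hq2cd.continuousOn
  have hIoo_nhds : ∀ {Ω : ℝ}, Ω ∈ Set.Ioo (0:ℝ) ε → I ∈ nhds Ω := fun h =>
    Filter.mem_of_superset (isOpen_Ioo.mem_nhds h) Set.Ioo_subset_Ico_self
  have hqd : ∀ Ω ∈ Set.Ioo (0:ℝ) ε, HasDerivAt q (q1 Ω) Ω := by
    intro Ω hΩ
    have h2 : DifferentiableAt ℝ q Ω :=
      ((hq.differentiableOn (by norm_num)) Ω (Set.Ioo_subset_Ico_self hΩ)).differentiableAt
        (hIoo_nhds hΩ)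
    rw [hq1]
    rw [show derivWithin q I Ω = deriv q Ω from derivWithin_of_mem_nhds (hIoo_nhds hΩ)]
    exact h2.hasDerivAt
  have hq1d : ∀ Ω ∈ Set.Ioo (0:ℝ) ε, HasDerivAt q1 (q2 Ω) Ω := by
    intro Ω hΩ
    have h2 : DifferentiableAt ℝ q1 Ω :=
      ((hq1cd.differentiableOn (by norm_num)) Ω (Set.Ioo_subset_Ico_self hΩ)).differentiableAt
        (hIoo_nhds hΩ)
    rw [hq2]
    rw [show derivWithin q1 I Ω = deriv q1 Ω from derivWithin_of_mem_nhds (hIoo_nhds hΩ)]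
    exact h2.hasDerivAt
  -- first derivative
  set gdot : ℝ → Matrix (Fin (m+3)) (Fin (m+3)) ℝ := fun Ω =>
    (2*Ω) • P + Ω^3 • A + ((((m:ℝ)+3))*Ω^(m+2)) • q Ω + Ω^(m+3) • q1 Ω with hgdot
  have hgd : ∀ Ω ∈ Set.Ioo (0:ℝ) ε, HasDerivAt g (gdot Ω) Ω := by
    intro Ω hΩ
    have hgfun : g = fun s => γ + s^2 • P + (s^4/4) • A + s^(m+3) • q s := funext hg
    rw [hgfun]
    have d0 : HasDerivAt (fun _:ℝ => γ) 0 Ω := hasDerivAt_const Ω γ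
    have d1 := (hasDerivAt_pow 2 Ω).smul_const P
    have d2 := ((hasDerivAt_pow 4 Ω).div_const 4).smul_const A
    have d3 := (hasDerivAt_pow (m+3) Ω).smul (hqd Ω hΩ)
    have h1 := ((d0.add d1).add d2).add d3
    convert h1 using 1
    case e'_9 =>
      simp only [hgdot]
      simp only [show m+3-1 = m+2 by omega]
      match_scalars <;> push_cast <;> ring
    all_goals rfl
  have hderiv_eq : ∀ Ω ∈ Set.Ioo (0:ℝ) ε, deriv g Ω = gdot Ω := fun Ω h => (hgd Ω h).deriv
  -- second derivative
  set gddot : ℝ → Matrix (Fin (m+3)) (Fin (m+3)) ℝ := fun Ω =>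
    (2:ℝ) • P + (3*Ω^2) • A + ((((m:ℝ)+3)*(((m:ℝ)+3)-1))*Ω^(m+1)) • q Ω
      + (2*(((m:ℝ)+3))*Ω^(m+2)) • q1 Ω + Ω^(m+3) • q2 Ω with hgddot
  have hgdd : ∀ Ω ∈ Set.Ioo (0:ℝ) ε, HasDerivAt gdot (gddot Ω) Ω := by
    intro Ω hΩ
    have d1 := ((hasDerivAt_id Ω).const_mul (2:ℝ)).smul_const P
    have d2 := (hasDerivAt_pow 3 Ω).smul_const A
    have d3 := ((hasDerivAt_pow (m+2) Ω).const_mul ((m:ℝ)+3)).smul (hqd Ω hΩ)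
    have d4 := (hasDerivAt_pow (m+3) Ω).smul (hq1d Ω hΩ)
    have h1 := ((d1.add d2).add d3).add d4
    simp only [hgdot]
    convert h1 using 1
    case e'_9 =>
      simp only [hgddot]
      simp only [show m+2-1 = m+1 by omega, show m+3-1 = m+2 by omega]
      match_scalars <;> push_cast <;> ring
    all_goals rfl
  have hderiv2_eq : ∀ Ω ∈ Set.Ioo (0:ℝ) ε, deriv (deriv g) Ω = gddot Ω := by
    intro Ω hΩ
    have hev : deriv g =ᶠ[nhds Ω] gdot :=
      Filter.eventuallyEq_of_mem (isOpen_Ioo.mem_nhds hΩ) hderiv_eq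
    rw [show deriv (deriv g) Ω = deriv gdot Ω from hev.deriv_eq]
    exact (hgdd Ω hΩ).deriv
  -- eventual invertibility of M
  have hMcont : Continuous M := by
    simp only [hM]
    exact continuous_const.add (((continuous_pow 2).div_const 2).smul continuous_const)
  have hdet1 : Filter.Tendsto (fun Ω => (M Ω).det) l (nhds 1) := by
    have h1 : Continuous fun Ω => (M Ω).det := hMcont.matrix_det
    have h2 := (h1.tendsto 0).mono_left hlnhds
    simpa [hM] using h2
  have hMunit : ∀ᶠ Ω in l, IsUnit (M Ω).det :=
    (hdet1.eventually_ne one_ne_zero).mono fun Ω h => isUnit_iff_ne_zero.2 h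
  -- pointwise identity
  have hkey : ∀ Ω ∈ Set.Ioo (0:ℝ) ε, IsUnit (M Ω).det →
      (Ω ^ ((2:ℤ) - ((m+3:ℕ):ℤ))) •
        ((1/2 : ℝ) • (deriv g Ω * (g Ω)⁻¹ * deriv g Ω)
          + Ω⁻¹ • deriv g Ω - deriv (deriv g) Ω) = F Ω := by
    intro Ω hΩ hMu
    have hΩ0 : Ω ≠ 0 := ne_of_gt hΩ.1
    have hGu : IsUnit (g Ω).det :=
      (Matrix.isUnit_iff_isUnit_det _).1 (hinv Ω (Set.Ioo_subset_Ico_self hΩ))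
    have hMM : M Ω * (M Ω)⁻¹ = 1 := Matrix.mul_nonsing_inv _ hMu
    have hM'M : (M Ω)⁻¹ * M Ω = 1 := Matrix.nonsing_inv_mul _ hMu
    have hGG : g Ω * (g Ω)⁻¹ = 1 := Matrix.mul_nonsing_inv _ hGu
    have hg0u : IsUnit (g0 Ω).det := by
      simp only [hg0, Matrix.det_mul]
      exact (hγu.mul hMu).mul hMu
    have hg0inv : (g0 Ω)⁻¹ * g0 Ω = 1 := Matrix.nonsing_inv_mul _ hg0u
    have hgdecomp : g Ω = g0 Ω + Ω^(m+3) • q Ω := by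
      have h1 : γ * M Ω * M Ω = γ + Ω^2 • P + (Ω^4/4) • A := by
        simp only [hM, mul_add, add_mul, mul_one, one_mul, mul_smul_comm, smul_mul_assoc,
          hγB, hPB, smul_smul]
        match_scalars <;> ring
      rw [hg Ω]
      simp only [hg0]
      rw [h1]
    have hGinv : (g Ω)⁻¹ = (g0 Ω)⁻¹ - Ω^(m+3) • ((g0 Ω)⁻¹ * (q Ω * (g Ω)⁻¹)) := by
      have h2 : (g0 Ω)⁻¹ * g Ω = 1 + Ω^(m+3) • ((g0 Ω)⁻¹ * q Ω) := by
        rw [hgdecomp, mul_add, hg0inv, mul_smul_comm]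
      have h3 : (g0 Ω)⁻¹ * g Ω * (g Ω)⁻¹
          = (g Ω)⁻¹ + Ω^(m+3) • ((g0 Ω)⁻¹ * (q Ω * (g Ω)⁻¹)) := by
        rw [h2, add_mul, one_mul, smul_mul_assoc, Matrix.mul_assoc]
      have h4 : (g0 Ω)⁻¹ * g Ω * (g Ω)⁻¹ = (g0 Ω)⁻¹ := by
        rw [Matrix.mul_assoc, hGG, mul_one]
      rw [h3] at h4
      exact (eq_sub_of_add_eq h4)
    have hg0i : (g0 Ω)⁻¹ = (M Ω)⁻¹ * ((M Ω)⁻¹ * γ⁻¹) := by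
      simp only [hg0]
      rw [Matrix.mul_inv_rev, Matrix.mul_inv_rev]
    have hBM : B * M Ω = M Ω * B := by
      simp only [hM, mul_add, add_mul, mul_one, one_mul, mul_smul_comm, smul_mul_assoc]
    have hXG0X : X Ω * ((g0 Ω)⁻¹ * X Ω) = A := by
      rw [hg0i]
      simp only [hX]
      have h1 : γ⁻¹ * (P * M Ω) = M Ω * B := by
        rw [← Matrix.mul_assoc, ← hB, hBM]
      calc P * M Ω * ((M Ω)⁻¹ * ((M Ω)⁻¹ * γ⁻¹) * (P * M Ω))
          = P * (M Ω * ((M Ω)⁻¹ * ((M Ω)⁻¹ * (γ⁻¹ * (P * M Ω))))) := by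
            simp only [Matrix.mul_assoc]
        _ = P * ((M Ω)⁻¹ * (γ⁻¹ * (P * M Ω))) := by
            rw [Matrix.mul_nonsing_inv_cancel_left _ _ hMu]
        _ = P * ((M Ω)⁻¹ * (M Ω * B)) := by rw [h1]
        _ = P * B := by rw [Matrix.nonsing_inv_mul_cancel_left _ _ hMu]
        _ = A := hPB
    have hXGX : X Ω * ((g Ω)⁻¹ * X Ω)
        = A - Ω^(m+3) • (X Ω * ((g0 Ω)⁻¹ * (q Ω * ((g Ω)⁻¹ * X Ω)))) := by
      conv_lhs => rw [hGinv]
      rw [sub_mul, smul_mul_assoc, mul_sub, mul_smul_comm, hXG0X]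
      congr 2
      simp only [Matrix.mul_assoc]
    have hXPA : X Ω = P + (Ω^2/2) • A := by
      simp only [hX, hM, mul_add, mul_one, mul_smul_comm, hPB]
    have huu : u Ω = ((m:ℝ)+3) • q Ω + Ω • q1 Ω := rfl
    have hgdX : gdot Ω = (2*Ω) • X Ω + Ω^(m+2) • u Ω := by
      simp only [hgdot]
      rw [hXPA, huu]
      simp only [smul_add, smul_smul]
      match_scalars <;> ring
    rw [hderiv_eq Ω hΩ, hderiv2_eq Ω hΩ, hgdX, hgddot,
      alg_key Ω hΩ0 (X Ω) (u Ω) A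
        (X Ω * ((g0 Ω)⁻¹ * (q Ω * ((g Ω)⁻¹ * X Ω))))
        (X Ω * ((g Ω)⁻¹ * u Ω)) (u Ω * ((g Ω)⁻¹ * X Ω)) (u Ω * ((g Ω)⁻¹ * u Ω))
        P (q Ω) (q1 Ω) (q2 Ω) ((g Ω)⁻¹) hXPA huu hXGX rfl rfl rfl]
    simp only [hF]
    rw [smul_smul]
    rw [show ((2:ℤ) - ((m+3:ℕ):ℤ)) = -((m+1:ℕ):ℤ) by push_cast; ring]
    rw [zpow_neg, zpow_natCast, inv_mul_cancel₀ (pow_ne_zero _ hΩ0), one_smul]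
  -- limits
  have tid : Filter.Tendsto (fun Ω:ℝ => Ω) l (nhds 0) := hlnhds
  have tq : Filter.Tendsto q l (nhds (q 0)) :=
    ((hq.continuousOn 0 h0I).mono_left hlIco)
  have tq1 : Filter.Tendsto q1 l (nhds (q1 0)) :=
    ((hq1cd.continuousOn 0 h0I).mono_left hlIco)
  have tq2 : Filter.Tendsto q2 l (nhds (q2 0)) :=
    ((hq2c 0 h0I).mono_left hlIco)
  have tM : Filter.Tendsto M l (nhds 1) := by
    have h := (hMcont.tendsto 0).mono_left hlnhds
    simpa [hM] using h
  have tg : Filter.Tendsto g l (nhds γ) := by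
    have hgfun : g = fun s => γ + s^2 • P + (s^4/4) • A + s^(m+3) • q s := funext hg
    rw [hgfun]
    have h : Filter.Tendsto (fun s:ℝ => γ + s^2 • P + (s^4/4) • A + s^(m+3) • q s) l
        (nhds (γ + (0:ℝ)^2 • P + ((0:ℝ)^4/4) • A + (0:ℝ)^(m+3) • q 0)) :=
      ((tendsto_const_nhds.add ((tid.pow 2).smul tendsto_const_nhds)).add
        (((tid.pow 4).div_const 4).smul tendsto_const_nhds)).add
        ((tid.pow (m+3)).smul tq)
    simpa using h
  have tg0 : Filter.Tendsto g0 l (nhds γ) := by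
    have h : Filter.Tendsto g0 l (nhds (γ * 1 * 1)) := by
      simp only [hg0]
      exact (tendsto_const_nhds.mul tM).mul tM
    simpa using h
  have hinvlim : ∀ (f : ℝ → Matrix (Fin (m+3)) (Fin (m+3)) ℝ),
      Filter.Tendsto f l (nhds γ) → Filter.Tendsto (fun Ω => (f Ω)⁻¹) l (nhds γ⁻¹) := by
    intro f hf
    have hc : ContinuousAt Inv.inv γ := by
      apply continuousAt_matrix_inv
      rw [Ring.inverse_eq_inv']
      exact continuousAt_inv₀ hγu.ne_zero
    exact (hc.tendsto.comp hf)
  have tGi : Filter.Tendsto (fun Ω => (g Ω)⁻¹) l (nhds γ⁻¹) := hinvlim g tg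
  have tG0i : Filter.Tendsto (fun Ω => (g0 Ω)⁻¹) l (nhds γ⁻¹) := hinvlim g0 tg0
  have tX : Filter.Tendsto X l (nhds P) := by
    have h : Filter.Tendsto X l (nhds (P * 1)) := by
      simp only [hX]; exact tendsto_const_nhds.mul tM
    simpa using h
  have tu : Filter.Tendsto u l (nhds (((m:ℝ)+3) • q 0)) := by
    have h : Filter.Tendsto u l (nhds (((m:ℝ)+3) • q 0 + (0:ℝ) • q1 0)) := by
      simp only [hu]
      exact (tq.const_smul _).add (tid.smul tq1)
    simpa using h
  have hFlim : Filter.Tendsto F l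
      (nhds ((-(((m+3:ℕ):ℝ) * (((m+3:ℕ):ℝ) - 2))) • q 0)) := by
    have h : Filter.Tendsto F l (nhds (
        (-(((m:ℝ)+3) * (((m:ℝ)+3) - 2))) • q 0 + ((1-2*((m:ℝ)+3))*(0:ℝ)) • q1 0
          - (0:ℝ)^2 • q2 0 - (2*(0:ℝ)^4) • (P * (γ⁻¹ * (q 0 * (γ⁻¹ * P))))
          + (0:ℝ)^2 • ((P * (γ⁻¹ * (((m:ℝ)+3) • q 0))) + ((((m:ℝ)+3) • q 0) * (γ⁻¹ * P)))
          + ((0:ℝ)^(m+3)/2) • ((((m:ℝ)+3) • q 0) * (γ⁻¹ * (((m:ℝ)+3) • q 0))))) := by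
      simp only [hF]
      exact (((((tq.const_smul _).add
        (((tendsto_const_nhds.mul tid).smul tq1))).sub
        ((tid.pow 2).smul tq2)).sub
        (((tendsto_const_nhds.mul (tid.pow 4)).smul (tX.mul (tG0i.mul (tq.mul (tGi.mul tX))))))).add
        ((tid.pow 2).smul ((tX.mul (tGi.mul tu)).add (tu.mul (tGi.mul tX))))).add
        (((tid.pow (m+3)).div_const 2).smul (tu.mul (tGi.mul tu)))
    have hval : ((-(((m:ℝ)+3) * (((m:ℝ)+3) - 2))) • q 0 + ((1-2*((m:ℝ)+3))*(0:ℝ)) • q1 0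
          - (0:ℝ)^2 • q2 0 - (2*(0:ℝ)^4) • (P * (γ⁻¹ * (q 0 * (γ⁻¹ * P))))
          + (0:ℝ)^2 • ((P * (γ⁻¹ * (((m:ℝ)+3) • q 0))) + ((((m:ℝ)+3) • q 0) * (γ⁻¹ * P)))
          + ((0:ℝ)^(m+3)/2) • ((((m:ℝ)+3) • q 0) * (γ⁻¹ * (((m:ℝ)+3) • q 0))))
        = (-(((m+3:ℕ):ℝ) * (((m+3:ℕ):ℝ) - 2))) • q 0 := by
      push_cast
      simp [zero_pow]
    rw [← hval]
    exact h
  refine Filter.Tendsto.congr' ?_ hFlim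
  filter_upwards [hmem, hMunit] with Ω hΩ hMu
  exact (hkey Ω hΩ hMu).symm
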